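/- Let Σ < H be a non-trivial subgroup of an infinite group H. Then Σ is highly core-free if and only if for all n ≥ 1, all x₁,…,xₙ ∈ H \ {1}, and every finite subset F ⊂ H, the set {h ∈ H : h·xᵢ ∉ ΣF for all i, and h·xᵢ·h⁻¹ ∉ Σ for all i} is non-empty. -/
import Mathlib


/-- The set ΣF = {σf : σ ∈ Σ, f ∈ F}. -/
def cosetProd {H : Type*} [Group H] (A : Subgroup H) (F : Set H) : Set H :=
  {h | ∃ σ ∈ A, ∃ f ∈ F, h = σ * f}

/-- A subgroup `A ≤ H` is highly core-free if for every finite `F ⊆ H`, every `n ≥ 1`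
and all nonempty `S₁, …, Sₙ ⊆ H` covering `H \ ΣF`, some `Sₖ` has trivial core
`⋂_{h ∈ Sₖ} h⁻¹ A h = {1}`. -/
def HighlyCoreFree {H : Type*} [Group H] (A : Subgroup H) : Prop :=
  ∀ F : Set H, F.Finite → ∀ n : ℕ, 1 ≤ n → ∀ S : Fin n → Set H,
    (∀ k, (S k).Nonempty) → (∀ h : H, h ∉ cosetProd A F → ∃ k, h ∈ S k) →
    ∃ k, ∀ x : H, (∀ h ∈ S k, h * x * h⁻¹ ∈ A) → x = 1

lemma cosetProd_mono {H : Type*} [Group H] (A : Subgroup H) {F G : Set H} (hFG : F ⊆ G) :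
    cosetProd A F ⊆ cosetProd A G := by
  rintro h ⟨σ, hσ, f, hf, rfl⟩
  exact ⟨σ, hσ, f, hFG hf, rfl⟩

lemma mem_cosetProd_mul {H : Type*} [Group H] (A : Subgroup H) (F : Set H) (h x : H) :
    h ∈ cosetProd A ((· * x⁻¹) '' F) ↔ h * x ∈ cosetProd A F := by
  constructor
  · rintro ⟨σ, hσ, f', ⟨f, hf, rfl⟩, rfl⟩
    exact ⟨σ, hσ, f, hf, by group⟩
  · rintro ⟨σ, hσ, f, hf, hx⟩
    refine ⟨σ, hσ, f * x⁻¹, ⟨f, hf, rfl⟩, ?_⟩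
    rw [← mul_assoc, ← hx]; group

/-- Characterisation (1 ⟺ 2) of highly core-free for a non-trivial subgroup of an
infinite group. -/
theorem hcf_iff_condition {H : Type*} [Group H] [Infinite H] (A : Subgroup H)
    (hne : A ≠ ⊥) :
    HighlyCoreFree A ↔
      ∀ n : ℕ, 1 ≤ n → ∀ x : Fin n → H, (∀ i, x i ≠ 1) → ∀ F : Set H, F.Finite →
        ∃ h : H, (∀ i, h * x i ∉ cosetProd A F) ∧ (∀ i, h * x i * h⁻¹ ∉ A) := by
  classical
  constructor
  · intro hcf n hn x hx F hF
    by_contra hcon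
    push_neg at hcon
    -- hcon : ∀ h, (∀ i, h * x i ∉ cosetProd A F) → ∃ i, h * x i * h⁻¹ ∈ A
    set F' : Set H := ⋃ i, (· * (x i)⁻¹) '' F with hF'def
    have hF'fin : F'.Finite := Set.finite_iUnion (fun i => hF.image _)
    set S : Fin n → Set H := fun i => {h | h * x i * h⁻¹ ∈ A} with hSdef
    have key : ∀ h : H, h ∉ cosetProd A F' → ∃ i, h ∈ S i := by
      intro h hh
      refine hcon h ?_
      intro i hi
      exact hh (cosetProd_mono A (Set.subset_iUnion _ i)
        ((mem_cosetProd_mul A F h (x i)).2 hi))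
    by_cases hS : ∃ i, (S i).Nonempty
    · obtain ⟨i0, hi0⟩ := hS
      set T : Fin n → Set H := fun k => if (S k).Nonempty then S k else S i0 with hTdef
      have hTne : ∀ k, (T k).Nonempty := by
        intro k
        by_cases hk : (S k).Nonempty
        · simp [hTdef, hk]
        · simpa [hTdef, hk] using hi0
      have hcov : ∀ h : H, h ∉ cosetProd A F' → ∃ k, h ∈ T k := by
        intro h hh
        obtain ⟨i, hi⟩ := key h hh
        refine ⟨i, ?_⟩
        have hne' : (S i).Nonempty := ⟨h, hi⟩
        simp only [hTdef, if_pos hne']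
        exact hi
      obtain ⟨k, hk⟩ := hcf F' hF'fin n hn T hTne hcov
      by_cases hk' : (S k).Nonempty
      · refine hx k (hk (x k) ?_)
        intro h hh
        simp only [hTdef, if_pos hk'] at hh
        exact hh
      · refine hx i0 (hk (x i0) ?_)
        intro h hh
        simp only [hTdef, if_neg hk'] at hh
        exact hh
    · push_neg at hS
      have hcov : ∀ h : H, h ∉ cosetProd A F' → ∃ k : Fin 1, h ∈ ({1} : Set H) := by
        intro h hh
        obtain ⟨i, hi⟩ := key h hh
        rw [hS i] at hi
        exact absurd hi (Set.notMem_empty h)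
      obtain ⟨k, hk⟩ := hcf F' hF'fin 1 le_rfl (fun _ => ({1} : Set H))
        (fun _ => ⟨1, rfl⟩) hcov
      obtain ⟨a, hane⟩ := (Subgroup.ne_bot_iff_exists_ne_one.1 hne)
      refine hane ?_
      have : (a : H) = 1 := hk (a : H) (by
        intro h hh
        simp only [Set.mem_singleton_iff] at hh
        subst hh
        simp only [one_mul, mul_one, inv_one]; exact a.2)
      exact_mod_cast this
  · intro cond F hF n hn S hSne hcov
    by_contra hcon
    push_neg at hcon
    -- hcon : ∀ k, ∃ x, (∀ h ∈ S k, h * x * h⁻¹ ∈ A) ∧ x ≠ 1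
    choose x hxA hxne using hcon
    have h0 : 0 < n := hn
    let i0 : Fin n := ⟨0, h0⟩
    set z : Fin (n + 1) → H :=
      Fin.cases (x i0) (fun j => x i0 * x j * (x i0)⁻¹) with hzdef
    have hzne : ∀ i, z i ≠ 1 := by
      refine Fin.cases ?_ ?_
      · simpa [hzdef] using hxne i0
      · intro j
        simp only [hzdef, Fin.cases_succ]
        intro hcontra
        apply hxne j
        have := congrArg (fun t => (x i0)⁻¹ * t * (x i0)) hcontra
        simpa [mul_assoc] using this
    obtain ⟨h, h1, h2⟩ := cond (n + 1) (by omega) z hzne F hF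
    have hg : h * x i0 ∉ cosetProd A F := by simpa [hzdef] using h1 0
    obtain ⟨k, hk⟩ := hcov (h * x i0) hg
    have hmem : (h * x i0) * x k * (h * x i0)⁻¹ ∈ A := hxA k _ hk
    have hnot : h * (x i0 * x k * (x i0)⁻¹) * h⁻¹ ∉ A := by
      simpa [hzdef] using h2 k.succ
    apply hnot
    have : h * (x i0 * x k * (x i0)⁻¹) * h⁻¹ = (h * x i0) * x k * (h * x i0)⁻¹ := by
      group
    rw [this]
    exact hmem
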